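/- Let s > 1/2, b > 1/2 and e ∈ {−1, +1}. Then there is a constant c > 0 such that for all nonnegative functions f, g, h ∈ L²(ℝ²): ∫∫∫∫_{ℝ⁴} f(ξ₁,τ₁) g(ξ₂,τ₂) h(ξ₁+ξ₂, τ₁+τ₂) · ⟨ξ₁⟩^{−s} · ⟨τ₂ + e|ξ₂|⟩^{−b} dξ₁ dτ₁ dξ₂ dτ₂ ≤ c ‖f‖_{L²} ‖g‖_{L²} ‖h‖_{L²}. -/

import Mathlib

open MeasureTheory
open scoped ENNReal NNReal

/-- Japanese bracket `⟨x⟩ = (1 + |x|²)^{1/2}`. -/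
noncomputable def jb (x : ℝ) : ℝ := Real.sqrt (1 + x ^ 2)

lemma jb_meas : Measurable jb :=
  (Real.continuous_sqrt.comp (continuous_const.add (continuous_pow 2))).measurable

lemma jb_rpow (x r : ℝ) : jb x ^ r = (1 + x ^ 2) ^ (r / 2) := by
  have h0 : (0:ℝ) ≤ 1 + x ^ 2 := by positivity
  rw [jb, Real.sqrt_eq_rpow, ← Real.rpow_mul h0]
  congr 1; ring

lemma jb_sq_ennreal (x r : ℝ) :
    (ENNReal.ofReal (jb x ^ (-r))) ^ (2:ℝ) = ENNReal.ofReal ((1 + x ^ 2) ^ (-r)) := by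
  have h0 : (0:ℝ) ≤ 1 + x ^ 2 := by positivity
  have h1 : (0:ℝ) ≤ jb x ^ (-r) := Real.rpow_nonneg (Real.sqrt_nonneg _) _
  rw [ENNReal.ofReal_rpow_of_nonneg h1 (by norm_num)]
  congr 1
  rw [jb_rpow, ← Real.rpow_mul h0]
  congr 1; ring

lemma aux_finite {r : ℝ} (hr : 1/2 < r) :
    ∫⁻ x : ℝ, ENNReal.ofReal ((1 + x ^ 2) ^ (-r)) < ⊤ := by
  have h2r : ((Module.finrank ℝ ℝ : ℝ)) < 2 * r := by
    simp [Module.finrank_self]; linarith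
  have hint : Integrable (fun x : ℝ => ((1:ℝ) + ‖x‖ ^ 2) ^ (-(2*r) / 2)) volume :=
    integrable_rpow_neg_one_add_norm_sq h2r
  have heq : ∀ x : ℝ, ((1:ℝ) + ‖x‖ ^ 2) ^ (-(2*r) / 2) = (1 + x ^ 2) ^ (-r) := by
    intro x
    rw [Real.norm_eq_abs, sq_abs]
    congr 1; ring
  simp only [heq] at hint
  have := hint.2
  rw [HasFiniteIntegral] at this
  refine lt_of_le_of_lt (lintegral_mono fun x => ?_) this
  rw [Real.enorm_eq_ofReal_abs, abs_of_nonneg (Real.rpow_nonneg (by positivity) _)]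

theorem stmt11 (s b : ℝ) (hs : 1/2 < s) (hb : 1/2 < b)
    (e : ℝ) (he : e = 1 ∨ e = -1) :
    ∃ c > (0:ℝ), ∀ f g h : ℝ × ℝ → ℝ, Measurable f → Measurable g → Measurable h →
      (∀ x, 0 ≤ f x) → (∀ x, 0 ≤ g x) → (∀ x, 0 ≤ h x) →
      MemLp f 2 volume → MemLp g 2 volume → MemLp h 2 volume →
      (∫⁻ p : (ℝ × ℝ) × (ℝ × ℝ),
        ENNReal.ofReal (f p.1 * g p.2 * h (p.1.1 + p.2.1, p.1.2 + p.2.2) *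
          jb p.1.1 ^ (-s) * jb (p.2.2 + e * |p.2.1|) ^ (-b)))
      ≤ ENNReal.ofReal c * eLpNorm f 2 volume * eLpNorm g 2 volume * eLpNorm h 2 volume := by
  classical
  -- constants
  set Cs : ℝ≥0∞ := ∫⁻ x : ℝ, ENNReal.ofReal ((1 + x ^ 2) ^ (-s)) with hCs
  set Cb : ℝ≥0∞ := ∫⁻ x : ℝ, ENNReal.ofReal ((1 + x ^ 2) ^ (-b)) with hCb
  have hCs_fin : Cs < ⊤ := aux_finite hs
  have hCb_fin : Cb < ⊤ := aux_finite hb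
  set K : ℝ≥0∞ := Cs * Cb with hK
  have hK_fin : K ≠ ⊤ := (ENNReal.mul_lt_top hCs_fin hCb_fin).ne
  have hKh_fin : K ^ (1/2 : ℝ) ≠ ⊤ := by
    exact (ENNReal.rpow_lt_top_of_nonneg (by norm_num) hK_fin).ne
  refine ⟨(K ^ (1/2:ℝ)).toReal + 1, by positivity, ?_⟩
  intro f g h hf hg hh h0f h0g h0h hfL hgL hhL
  set F : ℝ × ℝ → ℝ≥0∞ := fun p => ENNReal.ofReal (f p) with hFdef
  set G : ℝ × ℝ → ℝ≥0∞ := fun p => ENNReal.ofReal (g p) with hGdef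
  set H : ℝ × ℝ → ℝ≥0∞ := fun p => ENNReal.ofReal (h p) with hHdef
  set W1 : ℝ × ℝ → ℝ≥0∞ := fun p => ENNReal.ofReal (jb p.1 ^ (-s)) with hW1def
  set W2 : ℝ × ℝ → ℝ≥0∞ := fun p => ENNReal.ofReal (jb (p.2 + e * |p.1|) ^ (-b)) with hW2def
  have hF : Measurable F := hf.ennreal_ofReal
  have hG : Measurable G := hg.ennreal_ofReal
  have hH : Measurable H := hh.ennreal_ofReal
  have hW1 : Measurable W1 :=
    (((jb_meas.comp measurable_fst)).pow measurable_const).ennreal_ofReal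
  have hW2 : Measurable W2 :=
    ((jb_meas.comp (measurable_snd.add ((measurable_fst.abs).const_mul e))).pow
      measurable_const).ennreal_ofReal
  -- the shifted integrand
  set Ψ : (ℝ × ℝ) × (ℝ × ℝ) → ℝ≥0∞ :=
    fun w => F w.1 * W1 w.1 * G (w.2 - w.1) * W2 (w.2 - w.1) * H w.2 with hΨdef
  have hΨ : Measurable Ψ := by
    have hsub : Measurable fun w : (ℝ × ℝ) × (ℝ × ℝ) => w.2 - w.1 :=
      measurable_snd.sub measurable_fst
    exact (((( hF.comp measurable_fst).mul (hW1.comp measurable_fst)).mul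
      (hG.comp hsub)).mul (hW2.comp hsub)).mul (hH.comp measurable_snd)
  -- Step 1: rewrite the integrand and change variables
  have step1 : (∫⁻ p : (ℝ × ℝ) × (ℝ × ℝ),
        ENNReal.ofReal (f p.1 * g p.2 * h (p.1.1 + p.2.1, p.1.2 + p.2.2) *
          jb p.1.1 ^ (-s) * jb (p.2.2 + e * |p.2.1|) ^ (-b)))
      = ∫⁻ w : (ℝ × ℝ) × (ℝ × ℝ), Ψ w := by
    have hcv := (measurePreserving_prod_add (volume : Measure (ℝ × ℝ)) volume).lintegral_comp hΨ
    calc (∫⁻ p : (ℝ × ℝ) × (ℝ × ℝ),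
        ENNReal.ofReal (f p.1 * g p.2 * h (p.1.1 + p.2.1, p.1.2 + p.2.2) *
          jb p.1.1 ^ (-s) * jb (p.2.2 + e * |p.2.1|) ^ (-b)))
        = ∫⁻ z : (ℝ × ℝ) × (ℝ × ℝ), Ψ (z.1, z.1 + z.2) := by
          refine lintegral_congr fun z => ?_
          have h1 : (0:ℝ) ≤ jb z.1.1 ^ (-s) := Real.rpow_nonneg (Real.sqrt_nonneg _) _
          have h2 : (0:ℝ) ≤ jb (z.2.2 + e * |z.2.1|) ^ (-b) :=
            Real.rpow_nonneg (Real.sqrt_nonneg _) _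
          have hz : z.1 + z.2 = (z.1.1 + z.2.1, z.1.2 + z.2.2) := rfl
          rw [ENNReal.ofReal_mul (mul_nonneg (mul_nonneg (mul_nonneg (h0f _) (h0g _)) (h0h _)) h1),
            ENNReal.ofReal_mul (mul_nonneg (mul_nonneg (h0f _) (h0g _)) (h0h _)),
            ENNReal.ofReal_mul (mul_nonneg (h0f _) (h0g _)),
            ENNReal.ofReal_mul (h0f _)]
          simp only [hΨdef, hFdef, hGdef, hHdef, hW1def, hW2def, ← hz, add_sub_cancel_left]
          ring
      _ = ∫⁻ w : (ℝ × ℝ) × (ℝ × ℝ), Ψ w := by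
          rw [MeasureTheory.Measure.volume_eq_prod] at hcv ⊢
          exact hcv
  rw [step1]
  -- Step 2: Tonelli
  have step2 : (∫⁻ w : (ℝ × ℝ) × (ℝ × ℝ), Ψ w)
      = ∫⁻ r : ℝ × ℝ, H r * ∫⁻ p : ℝ × ℝ, F p * W1 p * G (r - p) * W2 (r - p) := by
    rw [MeasureTheory.Measure.volume_eq_prod, lintegral_prod_symm Ψ hΨ.aemeasurable]
    refine lintegral_congr fun r => ?_
    rw [← lintegral_const_mul _ (by
      have hsub : Measurable fun p : ℝ × ℝ => r - p := measurable_const.sub measurable_id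
      exact ((hF.mul hW1).mul (hG.comp hsub)).mul (hW2.comp hsub))]
    refine lintegral_congr fun p => ?_
    simp only [hΨdef]; ring
  rw [step2]
  -- weight integral computation
  have weight : ∀ r : ℝ × ℝ,
      (∫⁻ p : ℝ × ℝ, (W1 p * W2 (r - p)) ^ (2:ℝ)) = K := by
    intro r
    have hmeq : ∀ p : ℝ × ℝ, (W1 p * W2 (r - p)) ^ (2:ℝ)
        = ENNReal.ofReal ((1 + p.1 ^ 2) ^ (-s)) *
          ENNReal.ofReal ((1 + ((r.2 + e * |r.1 - p.1|) - p.2) ^ 2) ^ (-b)) := by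
      intro p
      rw [ENNReal.mul_rpow_of_nonneg _ _ (by norm_num), hW1def, hW2def, jb_sq_ennreal,
        jb_sq_ennreal]
      congr 3
      simp only [Prod.fst_sub, Prod.snd_sub]
      ring
    simp only [hmeq]
    have m1 : Measurable fun q : ℝ × ℝ => ENNReal.ofReal ((1 + q.1 ^ 2) ^ (-s)) := by
      apply Measurable.ennreal_ofReal
      exact ((measurable_fst.pow_const 2).const_add 1).pow measurable_const
    have m2 : Measurable fun q : ℝ × ℝ =>
        ENNReal.ofReal ((1 + ((r.2 + e * |r.1 - q.1|) - q.2) ^ 2) ^ (-b)) := by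
      apply Measurable.ennreal_ofReal
      apply Measurable.pow _ measurable_const
      apply Measurable.const_add
      exact ((((measurable_const.sub measurable_fst).abs.const_mul e).const_add r.2).sub
        measurable_snd).pow_const 2
    rw [MeasureTheory.Measure.volume_eq_prod, lintegral_prod _ (show AEMeasurable (fun p : ℝ × ℝ =>
      ENNReal.ofReal ((1 + p.1 ^ 2) ^ (-s)) *
        ENNReal.ofReal ((1 + ((r.2 + e * |r.1 - p.1|) - p.2) ^ 2) ^ (-b))) (volume.prod volume)
      from (m1.mul m2).aemeasurable)]
    calc (∫⁻ ξ : ℝ, ∫⁻ τ : ℝ, ENNReal.ofReal ((1 + ξ ^ 2) ^ (-s)) *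
            ENNReal.ofReal ((1 + ((r.2 + e * |r.1 - ξ|) - τ) ^ 2) ^ (-b)))
        = ∫⁻ ξ : ℝ, ENNReal.ofReal ((1 + ξ ^ 2) ^ (-s)) * Cb := by
          refine lintegral_congr fun ξ => ?_
          rw [lintegral_const_mul _ (by fun_prop)]
          congr 1
          have := (MeasureTheory.Measure.measurePreserving_sub_left (volume : Measure ℝ)
            (r.2 + e * |r.1 - ξ|)).lintegral_comp
            (f := fun τ : ℝ => ENNReal.ofReal ((1 + τ ^ 2) ^ (-b))) (by fun_prop)
          exact this
      _ = Cs * Cb := by rw [lintegral_mul_const _ (by fun_prop)]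
  -- inner Cauchy–Schwarz
  have hconj : Real.HolderConjugate 2 2 := by constructor <;> norm_num
  set A : ℝ × ℝ → ℝ≥0∞ := fun r => ∫⁻ p : ℝ × ℝ, (F p * G (r - p)) ^ (2:ℝ) with hAdef
  have hFG : Measurable (fun z : (ℝ × ℝ) × (ℝ × ℝ) => (F z.2 * G (z.1 - z.2)) ^ (2:ℝ)) := by
    exact ((hF.comp measurable_snd).mul
      (hG.comp (measurable_fst.sub measurable_snd))).pow measurable_const
  have hA : Measurable A := hFG.lintegral_prod_right'
  have inner_cs : ∀ r : ℝ × ℝ,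
      (∫⁻ p : ℝ × ℝ, F p * W1 p * G (r - p) * W2 (r - p))
        ≤ A r ^ (1/2:ℝ) * K ^ (1/2:ℝ) := by
    intro r
    have hsub : Measurable fun p : ℝ × ℝ => r - p := measurable_const.sub measurable_id
    have hcs := ENNReal.lintegral_mul_le_Lp_mul_Lq (volume : Measure (ℝ × ℝ)) hconj
      (f := fun p => F p * G (r - p)) (g := fun p => W1 p * W2 (r - p))
      ((hF.mul (hG.comp hsub)).aemeasurable) ((hW1.mul (hW2.comp hsub)).aemeasurable)
    calc (∫⁻ p : ℝ × ℝ, F p * W1 p * G (r - p) * W2 (r - p))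
        = ∫⁻ p : ℝ × ℝ, (fun p => F p * G (r - p)) p * (fun p => W1 p * W2 (r - p)) p := by
          refine lintegral_congr fun p => ?_; ring
      _ ≤ (∫⁻ p, (F p * G (r - p)) ^ (2:ℝ)) ^ (1/2:ℝ) *
            (∫⁻ p, (W1 p * W2 (r - p)) ^ (2:ℝ)) ^ (1/2:ℝ) := hcs
      _ = A r ^ (1/2:ℝ) * K ^ (1/2:ℝ) := by rw [weight r]
  -- outer estimate
  have step3 : (∫⁻ r : ℝ × ℝ, H r * ∫⁻ p : ℝ × ℝ, F p * W1 p * G (r - p) * W2 (r - p))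
      ≤ K ^ (1/2:ℝ) * ∫⁻ r : ℝ × ℝ, H r * A r ^ (1/2:ℝ) := by
    rw [← lintegral_const_mul _ (show Measurable (fun r => H r * A r ^ (1/2:ℝ)) from hH.mul (hA.pow measurable_const))]
    refine lintegral_mono fun r => ?_
    calc H r * ∫⁻ p : ℝ × ℝ, F p * W1 p * G (r - p) * W2 (r - p)
        ≤ H r * (A r ^ (1/2:ℝ) * K ^ (1/2:ℝ)) := by gcongr; exact inner_cs r
      _ = K ^ (1/2:ℝ) * (H r * A r ^ (1/2:ℝ)) := by ring
  -- second Cauchy-Schwarz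
  have step4 : (∫⁻ r : ℝ × ℝ, H r * A r ^ (1/2:ℝ))
      ≤ (∫⁻ r, H r ^ (2:ℝ)) ^ (1/2:ℝ) * (∫⁻ r, A r) ^ (1/2:ℝ) := by
    have hcs := ENNReal.lintegral_mul_le_Lp_mul_Lq (volume : Measure (ℝ × ℝ)) hconj
      (f := H) (g := fun r => A r ^ (1/2:ℝ))
      hH.aemeasurable ((hA.pow measurable_const).aemeasurable)
    have heq : ∀ r : ℝ × ℝ, (A r ^ (1/2:ℝ)) ^ (2:ℝ) = A r := by
      intro r
      rw [← ENNReal.rpow_mul]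
      norm_num
    calc (∫⁻ r : ℝ × ℝ, H r * A r ^ (1/2:ℝ)) = ∫⁻ r, (H * fun r => A r ^ (1/2:ℝ)) r := rfl
      _ ≤ (∫⁻ r, H r ^ (2:ℝ)) ^ (1/2:ℝ) * (∫⁻ r, (A r ^ (1/2:ℝ)) ^ (2:ℝ)) ^ (1/2:ℝ) := hcs
      _ = (∫⁻ r, H r ^ (2:ℝ)) ^ (1/2:ℝ) * (∫⁻ r, A r) ^ (1/2:ℝ) := by
          simp only [heq]
  -- compute ∫ A
  have stepA : (∫⁻ r : ℝ × ℝ, A r)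
      = (∫⁻ p, F p ^ (2:ℝ)) * (∫⁻ q, G q ^ (2:ℝ)) := by
    have hswap := lintegral_lintegral_swap (μ := (volume : Measure (ℝ × ℝ)))
      (ν := (volume : Measure (ℝ × ℝ)))
      (f := fun r p => (F p * G (r - p)) ^ (2:ℝ)) hFG.aemeasurable
    calc (∫⁻ r : ℝ × ℝ, A r) = ∫⁻ p : ℝ × ℝ, ∫⁻ r : ℝ × ℝ, (F p * G (r - p)) ^ (2:ℝ) := hswap
      _ = ∫⁻ p : ℝ × ℝ, F p ^ (2:ℝ) * ∫⁻ q, G q ^ (2:ℝ) := by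
          refine lintegral_congr fun p => ?_
          have : ∀ r : ℝ × ℝ, (F p * G (r - p)) ^ (2:ℝ)
              = F p ^ (2:ℝ) * G (r - p) ^ (2:ℝ) := fun r =>
            ENNReal.mul_rpow_of_nonneg _ _ (by norm_num)
          simp only [this]
          rw [lintegral_const_mul _ (show Measurable fun q : ℝ × ℝ => G (q - p) ^ (2:ℝ) from
            (hG.comp (measurable_id.sub measurable_const)).pow measurable_const)]
          congr 1
          exact lintegral_sub_right_eq_self (fun q => G q ^ (2:ℝ)) p
      _ = (∫⁻ p, F p ^ (2:ℝ)) * (∫⁻ q, G q ^ (2:ℝ)) := by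
          rw [lintegral_mul_const _ (hF.pow measurable_const)]
  -- identify Lp norms
  have normF : (∫⁻ p, F p ^ (2:ℝ)) ^ (1/2:ℝ) = eLpNorm f 2 volume := by
    rw [eLpNorm_eq_lintegral_rpow_enorm_toReal (by norm_num) (by norm_num)]
    simp only [ENNReal.toReal_ofNat]
    congr 1
    refine lintegral_congr fun p => ?_
    congr 1
    exact (Real.enorm_eq_ofReal (h0f p)).symm
  have normG : (∫⁻ p, G p ^ (2:ℝ)) ^ (1/2:ℝ) = eLpNorm g 2 volume := by
    rw [eLpNorm_eq_lintegral_rpow_enorm_toReal (by norm_num) (by norm_num)]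
    simp only [ENNReal.toReal_ofNat]
    congr 1
    refine lintegral_congr fun p => ?_
    congr 1
    exact (Real.enorm_eq_ofReal (h0g p)).symm
  have normH : (∫⁻ p, H p ^ (2:ℝ)) ^ (1/2:ℝ) = eLpNorm h 2 volume := by
    rw [eLpNorm_eq_lintegral_rpow_enorm_toReal (by norm_num) (by norm_num)]
    simp only [ENNReal.toReal_ofNat]
    congr 1
    refine lintegral_congr fun p => ?_
    congr 1
    exact (Real.enorm_eq_ofReal (h0h p)).symm
  -- final assembly
  have hc : K ^ (1/2:ℝ) ≤ ENNReal.ofReal ((K ^ (1/2:ℝ)).toReal + 1) := by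
    rw [ENNReal.ofReal_add ENNReal.toReal_nonneg (by norm_num),
      ENNReal.ofReal_toReal hKh_fin]
    exact le_add_of_nonneg_right (by norm_num)
  calc (∫⁻ r : ℝ × ℝ, H r * ∫⁻ p : ℝ × ℝ, F p * W1 p * G (r - p) * W2 (r - p))
      ≤ K ^ (1/2:ℝ) * ∫⁻ r : ℝ × ℝ, H r * A r ^ (1/2:ℝ) := step3
    _ ≤ K ^ (1/2:ℝ) * ((∫⁻ r, H r ^ (2:ℝ)) ^ (1/2:ℝ) * (∫⁻ r, A r) ^ (1/2:ℝ)) := by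
        gcongr
    _ = K ^ (1/2:ℝ) * ((∫⁻ r, H r ^ (2:ℝ)) ^ (1/2:ℝ) *
          ((∫⁻ p, F p ^ (2:ℝ)) ^ (1/2:ℝ) * (∫⁻ q, G q ^ (2:ℝ)) ^ (1/2:ℝ))) := by
        rw [stepA, ENNReal.mul_rpow_of_nonneg (∫⁻ p, F p ^ (2:ℝ)) (∫⁻ q, G q ^ (2:ℝ)) (by norm_num : (0:ℝ) ≤ 1/2)]
    _ = K ^ (1/2:ℝ) * (eLpNorm f 2 volume * eLpNorm g 2 volume * eLpNorm h 2 volume) := by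
        rw [normF, normG, normH]; ring
    _ ≤ ENNReal.ofReal ((K ^ (1/2:ℝ)).toReal + 1) *
          (eLpNorm f 2 volume * eLpNorm g 2 volume * eLpNorm h 2 volume) := by
        gcongr
    _ = ENNReal.ofReal ((K ^ (1/2:ℝ)).toReal + 1) * eLpNorm f 2 volume *
          eLpNorm g 2 volume * eLpNorm h 2 volume := by ring
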